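/- Let n ≥ 3 and N ≥ 2. Suppose that for any n distinct noncollinear points a_1, ..., a_n in ℝ², there exist clouds C_1, ..., C_n with C_i a cloud around a_i whose union is ℝ². Then for any n distinct noncollinear points b_1, ..., b_n in ℝ^N, there exist clouds D_1, ..., D_n with D_i a cloud around b_i whose union is ℝ^N. -/

import Mathlib

/-- `C` is a cloud around `a`: every affine line through `a` meets `C` in a finite set.
Affine lines through `a` are the sets `{a + t • v | t : ℝ}` for `v ≠ 0`. -/
def IsCloudAround {V : Type*} [AddCommGroup V] [Module ℝ V] (a : V) (C : Set V) : Prop :=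
  ∀ v : V, v ≠ 0 → ({p | ∃ t : ℝ, p = a + t • v} ∩ C).Finite



lemma exists_dual_avoiding {V : Type*} [AddCommGroup V] [Module ℝ V]
    (S : Submodule ℝ V) (T : Finset V) (hT : ∀ d ∈ T, d ∉ S) :
    ∃ h : Module.Dual ℝ V, (∀ x ∈ S, h x = 0) ∧ ∀ d ∈ T, h d ≠ 0 := by
  classical
  induction T using Finset.induction_on with
  | empty => exact ⟨0, fun x _ => rfl, fun d hd => absurd hd (Finset.notMem_empty d)⟩
  | @insert a s ha ih =>
    obtain ⟨h, hS, hs⟩ := ih (fun d hd => hT d (Finset.mem_insert_of_mem hd))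
    obtain ⟨h', h'a, h'S⟩ := S.exists_dual_map_eq_bot_of_notMem
      (hT a (Finset.mem_insert_self a s)) inferInstance
    have h'S0 : ∀ x ∈ S, h' x = 0 := by
      intro x hx
      have hm : h' x ∈ S.map h' := Submodule.mem_map_of_mem hx
      rwa [h'S, Submodule.mem_bot] at hm
    obtain ⟨c, hc⟩ := Infinite.exists_notMem_finset
      ((insert a s).image fun e => -(h e) / h' e)
    refine ⟨h + c • h', fun x hx => by simp [hS x hx, h'S0 x hx], ?_⟩
    intro d hd
    have hd' : -(h d) / h' d ∈ (insert a s).image fun e => -(h e) / h' e :=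
      Finset.mem_image_of_mem _ hd
    have hcd : c ≠ -(h d) / h' d := fun hcc => hc (hcc ▸ hd')
    simp only [LinearMap.add_apply, LinearMap.smul_apply, smul_eq_mul]
    rcases Finset.mem_insert.mp hd with rfl | hds
    · intro hzero
      exact hcd (by rw [eq_div_iff h'a]; linarith)
    · intro hzero
      by_cases h'd : h' d = 0
      · rw [h'd, mul_zero, add_zero] at hzero; exact hs d hds hzero
      · exact hcd (by rw [eq_div_iff h'd]; linarith)

lemma exists_pair_functionals {V : Type*} [AddCommGroup V] [Module ℝ V]
    {u w : V} (huw : LinearIndependent ℝ ![u, w]) (T : Finset V)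
    (hT0 : ∀ d ∈ T, d ≠ 0) :
    ∃ f g : V →ₗ[ℝ] ℝ, f u = 1 ∧ f w = 0 ∧ g u = 0 ∧ g w = 1 ∧
      ∀ d ∈ T, f d ≠ 0 ∨ g d ≠ 0 := by
  classical
  have hne : u ≠ w := by
    intro h
    have h2 := huw.injective (show ![u, w] 0 = ![u, w] 1 by simp [h])
    exact absurd h2 (by decide)
  set s : Set V := Set.range ![u, w] with hs
  have hli : LinearIndepOn ℝ id s := (linearIndepOn_id_range_iff huw.injective).mpr huw
  set B := Module.Basis.extend hli with hB
  have hu : u ∈ hli.extend (Set.subset_univ s) :=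
    hli.subset_extend _ ⟨0, by simp⟩
  have hw : w ∈ hli.extend (Set.subset_univ s) :=
    hli.subset_extend _ ⟨1, by simp⟩
  have hBu : B ⟨u, hu⟩ = u := Module.Basis.extend_apply_self hli _
  have hBw : B ⟨w, hw⟩ = w := Module.Basis.extend_apply_self hli _
  set f0 := B.coord ⟨u, hu⟩ with hf0
  set g0 := B.coord ⟨w, hw⟩ with hg0
  have hsub : Subtype.mk (p := fun x => x ∈ hli.extend (Set.subset_univ s)) u hu ≠ ⟨w, hw⟩ := by
    simp [Subtype.ext_iff, hne]
  have hf0u : f0 u = 1 := by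
    have h1 : f0 (B ⟨u, hu⟩) = 1 := by rw [hf0, Module.Basis.coord_apply, Module.Basis.repr_self]; simp
    rwa [hBu] at h1
  have hf0w : f0 w = 0 := by
    have h1 : f0 (B ⟨w, hw⟩) = 0 := by
      rw [hf0, Module.Basis.coord_apply, Module.Basis.repr_self]
      simp [Finsupp.single_apply, Ne.symm hsub]
    rwa [hBw] at h1
  have hg0u : g0 u = 0 := by
    have h1 : g0 (B ⟨u, hu⟩) = 0 := by
      rw [hg0, Module.Basis.coord_apply, Module.Basis.repr_self]
      simp [Finsupp.single_apply, hsub]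
    rwa [hBu] at h1
  have hg0w : g0 w = 1 := by
    have h1 : g0 (B ⟨w, hw⟩) = 1 := by rw [hg0, Module.Basis.coord_apply, Module.Basis.repr_self]; simp
    rwa [hBw] at h1
  have hspan : ∀ d, f0 d = 0 → g0 d = 0 → d ∈ Submodule.span ℝ {u, w} → d = 0 := by
    intro d h1 h2 hd
    obtain ⟨α, β, habd⟩ := Submodule.mem_span_pair.mp hd
    rw [← habd] at h1 h2
    simp only [map_add, map_smul, smul_eq_mul, hf0u, hf0w, hg0u, hg0w,
      mul_one, mul_zero, add_zero, zero_add] at h1 h2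
    rw [← habd, h1, h2, zero_smul, zero_smul, add_zero]
  obtain ⟨h, hhspan, hhbad⟩ := exists_dual_avoiding (Submodule.span ℝ {u, w})
      (T.filter (fun d => f0 d = 0 ∧ g0 d = 0))
      (by
        intro d hd
        rw [Finset.mem_filter] at hd
        intro hmem
        exact hT0 d hd.1 (hspan d hd.2.1 hd.2.2 hmem))
  have hhu : h u = 0 := hhspan u (Submodule.subset_span (by simp))
  have hhw : h w = 0 := hhspan w (Submodule.subset_span (by simp))
  obtain ⟨c, hc⟩ := Infinite.exists_notMem_finset
    (insert (0 : ℝ) (T.image fun d => -(f0 d) / h d))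
  have hc0 : c ≠ 0 := fun hcc => hc (hcc ▸ Finset.mem_insert_self _ _)
  refine ⟨f0 + c • h, g0, by simp [hf0u, hhu], by simp [hf0w, hhw], hg0u, hg0w, ?_⟩
  intro d hd
  by_cases hg : g0 d = 0
  · left
    simp only [LinearMap.add_apply, LinearMap.smul_apply, smul_eq_mul]
    by_cases hf : f0 d = 0
    · have hhd : h d ≠ 0 := hhbad d (Finset.mem_filter.mpr ⟨hd, hf, hg⟩)
      rw [hf, zero_add]
      exact mul_ne_zero hc0 hhd
    · intro hzero
      by_cases hhd : h d = 0
      · rw [hhd, mul_zero, add_zero] at hzero; exact hf hzero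
      · exact hc (Finset.mem_insert_of_mem (Finset.mem_image.mpr ⟨d, hd, by
          rw [eq_comm, eq_div_iff hhd]; linarith⟩))
  · exact Or.inr hg

theorem clouds_at_points_two_to_N (n N : ℕ) (hn : 3 ≤ n) (hN : 2 ≤ N)
    (h2 : ∀ a : Fin n → (Fin 2 → ℝ), Function.Injective a → ¬ Collinear ℝ (Set.range a) →
      ∃ C : Fin n → Set (Fin 2 → ℝ),
        (∀ i, IsCloudAround (a i) (C i)) ∧ (⋃ i, C i) = Set.univ) :
    ∀ b : Fin n → (Fin N → ℝ), Function.Injective b → ¬ Collinear ℝ (Set.range b) →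
      ∃ D : Fin n → Set (Fin N → ℝ),
        (∀ i, IsCloudAround (b i) (D i)) ∧ (⋃ i, D i) = Set.univ := by
  intro b hb hbc
  classical
  haveI : NeZero n := ⟨by omega⟩
  have h01 : (0 : Fin n) ≠ 1 := by
    intro h
    have hval : (0 : Fin n).val = (1 : Fin n).val := by rw [h]
    rw [Fin.val_zero, Fin.val_one', Nat.mod_eq_of_lt (by omega)] at hval
    exact absurd hval.symm one_ne_zero
  have hv0 : b 1 - b 0 ≠ 0 := sub_ne_zero.mpr (fun h => h01.symm (hb h))
  -- find k with b k - b 0 and b 1 - b 0 linearly independent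
  have hex : ∃ k, LinearIndependent ℝ ![b k - b 0, b 1 - b 0] := by
    by_contra hno
    push_neg at hno
    apply hbc
    rw [collinear_iff_of_mem (Set.mem_range_self 0)]
    refine ⟨b 1 - b 0, ?_⟩
    rintro p ⟨s, rfl⟩
    have hnos := hno s
    rw [linearIndependent_fin2] at hnos
    push_neg at hnos
    simp only [Matrix.cons_val_one, Matrix.head_cons, Matrix.cons_val_zero] at hnos
    obtain ⟨r, hr⟩ := hnos hv0
    exact ⟨r, by rw [vadd_eq_add]; exact sub_eq_iff_eq_add.mp hr.symm⟩
  obtain ⟨k, hLI⟩ := hex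
  -- the finite set of differences
  set T : Finset (Fin N → ℝ) :=
    (Finset.univ.filter fun p : Fin n × Fin n => p.1 ≠ p.2).image
      (fun p => b p.1 - b p.2) with hT
  have hT0 : ∀ d ∈ T, d ≠ 0 := by
    intro d hd
    rw [hT, Finset.mem_image] at hd
    obtain ⟨p, hp, rfl⟩ := hd
    rw [Finset.mem_filter] at hp
    exact sub_ne_zero.mpr (fun h => hp.2 (hb h))
  obtain ⟨f, g, hfu, hfw, hgu, hgw, hfg⟩ := exists_pair_functionals hLI T hT0
  set π : (Fin N → ℝ) → (Fin 2 → ℝ) := fun p => ![f p, g p] with hπ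
  set a : Fin n → (Fin 2 → ℝ) := fun s => π (b s) with ha
  have hπadd : ∀ (p v : Fin N → ℝ) (t : ℝ), π (p + t • v) = π p + t • π v := by
    intro p v t
    funext jj
    fin_cases jj <;>
      simp [hπ, map_add, map_smul, smul_eq_mul]
  have hmemT : ∀ s t : Fin n, s ≠ t → b s - b t ∈ T := by
    intro s t hst
    rw [hT, Finset.mem_image]
    exact ⟨(s, t), Finset.mem_filter.mpr ⟨Finset.mem_univ _, hst⟩, rfl⟩
  have hainj : Function.Injective a := by
    intro s t hst
    by_contra hne
    rcases hfg _ (hmemT s t hne) with hf' | hg'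
    · have h0 := congrFun hst 0
      simp only [ha, hπ, Matrix.cons_val_zero] at h0
      exact hf' (by rw [map_sub, h0, sub_self])
    · have h1 := congrFun hst 1
      simp only [ha, hπ, Matrix.cons_val_one, Matrix.head_cons, Matrix.cons_val_zero] at h1
      exact hg' (by rw [map_sub, h1, sub_self])
  have hak0 : ∀ jj : Fin 2, a k jj - a 0 jj = ![(1:ℝ), 0] jj := by
    intro jj
    fin_cases jj <;> simp [ha, hπ, ← map_sub, hfu, hgu]
  have ha10 : ∀ jj : Fin 2, a 1 jj - a 0 jj = ![(0:ℝ), 1] jj := by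
    intro jj
    fin_cases jj <;> simp [ha, hπ, ← map_sub, hfw, hgw]
  have hanc : ¬ Collinear ℝ (Set.range a) := by
    intro hcol
    rw [collinear_iff_of_mem (Set.mem_range_self 0)] at hcol
    obtain ⟨v, hv⟩ := hcol
    obtain ⟨r, hr⟩ := hv (a k) (Set.mem_range_self k)
    obtain ⟨q, hq⟩ := hv (a 1) (Set.mem_range_self 1)
    have e1 : r * v 0 = 1 := by
      have := congrFun hr 0
      have h0 := hak0 0
      simp [vadd_eq_add] at this h0
      linarith
    have e2 : r * v 1 = 0 := by
      have := congrFun hr 1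
      have h0 := hak0 1
      simp [vadd_eq_add] at this h0
      linarith
    have e3 : q * v 0 = 0 := by
      have := congrFun hq 0
      have h0 := ha10 0
      simp [vadd_eq_add] at this h0
      linarith
    have e4 : q * v 1 = 1 := by
      have := congrFun hq 1
      have h0 := ha10 1
      simp [vadd_eq_add] at this h0
      linarith
    nlinarith [e1, e2, e3, e4]
  obtain ⟨C, hC, hCunion⟩ := h2 a hainj hanc
  refine ⟨fun i => {p | (π p ∈ C i ∧ π p ∉ Set.range a) ∨ ∃ m, m ≠ i ∧ π p = a m}, ?_, ?_⟩
  · intro i v hv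
    by_cases hπv : π v = 0
    · have hempty : ({p | ∃ t : ℝ, p = b i + t • v} ∩
          {p | (π p ∈ C i ∧ π p ∉ Set.range a) ∨ ∃ m, m ≠ i ∧ π p = a m}) = ∅ := by
        rw [Set.eq_empty_iff_forall_notMem]
        rintro p ⟨⟨t, rfl⟩, hp⟩
        have hπp : π (b i + t • v) = a i := by
          rw [hπadd, hπv, smul_zero, add_zero]
        rcases hp with ⟨_, hnr⟩ | ⟨m, hmi, hpm⟩
        · exact hnr (hπp ▸ Set.mem_range_self i)
        · have hma : a m = a i := by rw [← hpm, hπp]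
          exact hmi (hainj hma)
      rw [hempty]
      exact Set.finite_empty
    · have hfin1 : ({p | ∃ t : ℝ, p = b i + t • v} ∩ {p | π p ∈ C i}).Finite := by
        have hCfin := hC i (π v) hπv
        apply Set.Finite.of_finite_image (f := π)
        · apply hCfin.subset
          rintro q ⟨p, ⟨⟨t, rfl⟩, hmem⟩, rfl⟩
          exact ⟨⟨t, by rw [hπadd]⟩, hmem⟩
        · rintro p ⟨⟨t, rfl⟩, -⟩ q ⟨⟨t', rfl⟩, -⟩ hpq
          rw [hπadd, hπadd] at hpq
          have htt : t = t' := smul_left_injective ℝ hπv (add_left_cancel hpq)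
          rw [htt]
      have hfin2 : ∀ m : Fin n,
          ({p | ∃ t : ℝ, p = b i + t • v} ∩ {p | π p = a m}).Finite := by
        intro m
        apply Set.Subsingleton.finite
        rintro p ⟨⟨t, rfl⟩, hp⟩ q ⟨⟨t', rfl⟩, hq⟩
        rw [Set.mem_setOf_eq, hπadd] at hp
        rw [Set.mem_setOf_eq, hπadd] at hq
        have : t = t' := smul_left_injective ℝ hπv (add_left_cancel (hp.trans hq.symm))
        rw [this]
      apply Set.Finite.subset (hfin1.union (Set.finite_iUnion hfin2))
      rintro p ⟨hL, hD⟩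
      rcases hD with ⟨hmem, -⟩ | ⟨m, -, hpm⟩
      · exact Or.inl ⟨hL, hmem⟩
      · exact Or.inr (Set.mem_iUnion.mpr ⟨m, hL, hpm⟩)
  · ext p
    simp only [Set.mem_iUnion, Set.mem_univ, iff_true, Set.mem_setOf_eq]
    have hπpU : π p ∈ ⋃ i, C i := hCunion ▸ Set.mem_univ _
    obtain ⟨i, hi⟩ := Set.mem_iUnion.mp hπpU
    by_cases hr : π p ∈ Set.range a
    · obtain ⟨m, hm⟩ := hr
      obtain ⟨i', hi'⟩ : ∃ i' : Fin n, i' ≠ m := by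
        rcases eq_or_ne m 0 with rfl | hm0
        · exact ⟨1, h01.symm⟩
        · exact ⟨0, Ne.symm hm0⟩
      exact ⟨i', Or.inr ⟨m, Ne.symm hi', hm.symm⟩⟩
    · exact ⟨i, Or.inl ⟨hi, hr⟩⟩
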